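/- Suppose E is an eigenvalue of the finite block tridiagonal matrix H_N (the N×N block Toeplitz matrix with subdiagonal blocks R, diagonal blocks V, superdiagonal blocks T, with R and T invertible) with some multiplicity. Then det(H_N − E·1) = (−1)^{NL} det(T)^N · det_L( π₁* (𝒯^E)^N π₁ ), where π₁ : ℂ^L → ℂ^{2L} is the inclusion onto the first L coordinates and 𝒯^E = ((E·1 − V)T⁻¹, −R; T⁻¹, 0); this identity holds as an equality of polynomials in E. -/

import Mathlib

open Matrix

noncomputable section

/-- The transfer matrix `𝒯^E` built from blocks `((E·1 − V)T⁻¹, −R; T⁻¹, 0)`. -/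
def transferMatrix {L : ℕ} (R V T : Matrix (Fin L) (Fin L) ℂ) (E : ℂ) :
    Matrix (Fin L ⊕ Fin L) (Fin L ⊕ Fin L) ℂ :=
  Matrix.fromBlocks ((E • (1 : Matrix (Fin L) (Fin L) ℂ) - V) * T⁻¹) (-R) T⁻¹ 0

/-- The finite block tridiagonal Toeplitz matrix `H_N` with diagonal blocks `V`,
superdiagonal blocks `T` and subdiagonal blocks `R`. -/
def blockTridiag (L N : ℕ) (R V T : Matrix (Fin L) (Fin L) ℂ) :
    Matrix (Fin N × Fin L) (Fin N × Fin L) ℂ :=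
  fun p q =>
    if p.1 = q.1 then V p.2 q.2
    else if (p.1 : ℕ) + 1 = (q.1 : ℕ) then T p.2 q.2
    else if (q.1 : ℕ) + 1 = (p.1 : ℕ) then R p.2 q.2
    else 0

namespace BTAux

variable {L : ℕ} (R V T : Matrix (Fin L) (Fin L) ℂ) (E : ℂ)

/-- Matrix solutions of the transfer recursion with `ψ 0 = 0`, `ψ 1 = T⁻¹`. -/
def psi : ℕ → Matrix (Fin L) (Fin L) ℂ
  | 0 => 0
  | 1 => T⁻¹
  | (n+2) => -T⁻¹ * ((V - E • 1) * psi (n+1) + R * psi n)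

variable {R V T}

lemma psi_rec (hT : IsUnit T.det) (n : ℕ) :
    T * psi R V T E (n+2) = -((V - E • 1) * psi R V T E (n+1) + R * psi R V T E n) := by
  show T * (-T⁻¹ * _) = _
  rw [Matrix.neg_mul, Matrix.mul_neg, ← Matrix.mul_assoc, Matrix.mul_nonsing_inv _ hT,
    Matrix.one_mul]

lemma transfer_pow_blocks (hT : IsUnit T.det) (n : ℕ) :
    ∃ Y W, (transferMatrix R V T E) ^ n
      = Matrix.fromBlocks (T * psi R V T E (n+1)) Y (psi R V T E n) W := by
  induction n with
  | zero =>
      refine ⟨0, 1, ?_⟩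
      rw [pow_zero]
      have h1 : T * psi R V T E 1 = 1 := Matrix.mul_nonsing_inv _ hT
      rw [h1]
      show _ = Matrix.fromBlocks 1 0 (0 : Matrix (Fin L) (Fin L) ℂ) 1
      rw [Matrix.fromBlocks_one]
  | succ n ih =>
      obtain ⟨Y, W, hYW⟩ := ih
      refine ⟨(E • 1 - V) * T⁻¹ * Y + -R * W, T⁻¹ * Y + 0 * W, ?_⟩
      rw [pow_succ', hYW, transferMatrix, Matrix.fromBlocks_multiply]
      have h11 : (E • (1 : Matrix (Fin L) (Fin L) ℂ) - V) * T⁻¹ * (T * psi R V T E (n + 1))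
          + -R * psi R V T E n = T * psi R V T E (n + 2) := by
        rw [Matrix.mul_assoc _ T⁻¹, ← Matrix.mul_assoc T⁻¹ T,
          Matrix.nonsing_inv_mul _ hT, Matrix.one_mul, psi_rec E hT n]
        noncomm_ring
      have h21 : T⁻¹ * (T * psi R V T E (n + 1)) + 0 * psi R V T E n = psi R V T E (n + 1) := by
        rw [← Matrix.mul_assoc, Matrix.nonsing_inv_mul _ hT, Matrix.one_mul,
          Matrix.zero_mul, add_zero]
      rw [h11, h21]

lemma toBlocks₁₁_transfer_pow (hT : IsUnit T.det) (n : ℕ) :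
    Matrix.toBlocks₁₁ ((transferMatrix R V T E) ^ n) = T * psi R V T E (n+1) := by
  obtain ⟨Y, W, h⟩ := transfer_pow_blocks E hT n
  rw [h, Matrix.toBlocks_fromBlocks₁₁]

lemma det_blockLowerTriangular {L N : ℕ} (M : Matrix (Fin N × Fin L) (Fin N × Fin L) ℂ)
    (D : Fin N → Matrix (Fin L) (Fin L) ℂ)
    (h0 : ∀ p q : Fin N × Fin L, p.1 < q.1 → M p q = 0)
    (hd : ∀ (k : Fin N) (a b : Fin L), M (k, a) (k, b) = D k a b) :
    M.det = ∏ k : Fin N, (D k).det := by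
  rw [← Matrix.det_transpose]
  have hbt : Mᵀ.BlockTriangular (fun p => p.1) := fun i j hij => h0 j i hij
  rw [hbt.det_fintype]
  refine Finset.prod_congr rfl fun k _ => ?_
  let e : Fin L ≃ {p : Fin N × Fin L // p.1 = k} :=
    { toFun := fun l => ⟨(k, l), rfl⟩
      invFun := fun p => p.1.2
      left_inv := fun l => rfl
      right_inv := fun p => by
        rcases p with ⟨⟨k', l⟩, hk⟩
        subst hk
        rfl }
  rw [← Matrix.det_submatrix_equiv_self e (Mᵀ.toSquareBlock (fun p => p.1) k)]
  have : (Mᵀ.toSquareBlock (fun p => p.1) k).submatrix e e = (D k)ᵀ := by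
    ext a b
    simp only [Matrix.toSquareBlock, Matrix.toSquareBlockProp, Matrix.submatrix_apply,
      Matrix.transpose_apply]
    exact hd k b a
  rw [this, Matrix.det_transpose]

end BTAux

theorem det_blockTridiag_eq_det_transfer_pow (L N : ℕ) (hL : 1 ≤ L) (hN : 1 ≤ N)
    (R V T : Matrix (Fin L) (Fin L) ℂ)
    (hR : IsUnit R.det) (hT : IsUnit T.det) (E : ℂ) :
    (blockTridiag L N R V T - E • 1).det
      = (-1 : ℂ) ^ (N * L) * T.det ^ N
          * (Matrix.toBlocks₁₁ ((transferMatrix R V T E) ^ N)).det := by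
  obtain ⟨n, rfl⟩ : ∃ n, N = n + 1 := ⟨N - 1, by omega⟩
  set ψ := BTAux.psi R V T E with hψ
  set A := V - E • (1 : Matrix (Fin L) (Fin L) ℂ) with hA
  have hψ0 : ψ 0 = 0 := rfl
  have hψ1 : T * ψ 1 = 1 := Matrix.mul_nonsing_inv _ hT
  set H := blockTridiag L (n+1) R V T - E • (1 : Matrix (Fin (n+1) × Fin L) (Fin (n+1) × Fin L) ℂ) with hH
  -- entries of H
  have Hent : ∀ p q : Fin (n+1) × Fin L, H p q =
      (if p.1 = q.1 then A p.2 q.2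
        else if (p.1 : ℕ) + 1 = (q.1 : ℕ) then T p.2 q.2
        else if (q.1 : ℕ) + 1 = (p.1 : ℕ) then R p.2 q.2 else 0) := by
    intro p q
    simp only [hH, Matrix.sub_apply, Matrix.smul_apply, Matrix.one_apply, blockTridiag, hA,
      smul_eq_mul, mul_ite, mul_one, mul_zero]
    by_cases h1 : p.1 = q.1
    · by_cases h2 : p.2 = q.2
      · have hpq : p = q := Prod.ext h1 h2
        simp [h1, h2, hpq]
      · have hpq : p ≠ q := fun h => h2 (congrArg Prod.snd h)
        simp [h1, h2, hpq]
    · have hpq : p ≠ q := fun h => h1 (congrArg Prod.fst h)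
      have h1' : ¬ ((p.1 : ℕ) + 1 = (q.1 : ℕ) ∧ (q.1 : ℕ) + 1 = (p.1 : ℕ)) := by omega
      simp only [h1, hpq, if_false, if_neg, sub_zero]
  -- the solution matrix S and the target M
  set S : Matrix (Fin (n+1) × Fin L) (Fin (n+1) × Fin L) ℂ :=
    fun p q => ψ ((p.1 : ℕ) + 1 - (q.1 : ℕ)) p.2 q.2 with hS
  set M : Matrix (Fin (n+1) × Fin L) (Fin (n+1) × Fin L) ℂ :=
    fun p q => if (p.1 : ℕ) + 1 = (q.1 : ℕ) ∧ p.2 = q.2 then 1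
      else if (p.1 : ℕ) = n then (-(T * ψ (n + 2 - (q.1 : ℕ)))) p.2 q.2 else 0 with hM
  have key : H * S = M := by
    ext p q
    rw [Matrix.mul_apply, Fintype.sum_prod_type]
    set i := (p.1 : ℕ) with hi
    set j := (q.1 : ℕ) with hj
    have hiN : i < n + 1 := p.1.isLt
    have hjN : j < n + 1 := q.1.isLt
    have hsum1 : ∀ r : Fin (n+1), (∑ l, H p (r, l) * S (r, l) q)
        = (if p.1 = r then (A * ψ ((r : ℕ) + 1 - j)) p.2 q.2 else 0)
          + (if i + 1 = (r : ℕ) then (T * ψ ((r : ℕ) + 1 - j)) p.2 q.2 else 0)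
          + (if (r : ℕ) + 1 = i then (R * ψ ((r : ℕ) + 1 - j)) p.2 q.2 else 0) := by
      intro r
      simp only [Hent, hS, ← hi, ← hj]
      by_cases h1 : p.1 = r
      · have hv : (r : ℕ) = i := by rw [← h1]
        have h2 : ¬ (i + 1 = (r : ℕ)) := by omega
        have h3 : ¬ ((r : ℕ) + 1 = i) := by omega
        simp only [h1, if_true, h2, h3, if_false, add_zero, ← Matrix.mul_apply]
      · have hv : ¬ ((r : ℕ) = i) := fun h => h1 (Fin.ext (by omega))
        by_cases h2 : i + 1 = (r : ℕ)
        · have h3 : ¬ ((r : ℕ) + 1 = i) := by omega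
          simp only [h1, if_false, h2, if_true, h3, zero_add, add_zero, ← Matrix.mul_apply]
        · by_cases h3 : (r : ℕ) + 1 = i
          · simp only [h1, h2, h3, if_false, if_true, zero_add, ← Matrix.mul_apply]
          · simp only [h1, h2, h3, if_false, zero_add, add_zero, zero_mul,
              Finset.sum_const_zero]
    rw [Finset.sum_congr rfl (fun r _ => hsum1 r)]
    rw [Finset.sum_add_distrib, Finset.sum_add_distrib]
    have S1 : (∑ r : Fin (n+1), if p.1 = r then (A * ψ ((r : ℕ) + 1 - j)) p.2 q.2 else 0)
        = (A * ψ (i + 1 - j)) p.2 q.2 := by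
      rw [Finset.sum_ite_eq]
      simp [hi]
    have S2 : (∑ r : Fin (n+1), if i + 1 = (r : ℕ) then (T * ψ ((r : ℕ) + 1 - j)) p.2 q.2 else 0)
        = (if i < n then (T * ψ (i + 2 - j)) p.2 q.2 else 0) := by
      by_cases hin : i < n
      · have hlt : i + 1 < n + 1 := by omega
        rw [if_pos hin]
        have hrw : ∀ r : Fin (n+1), (if i + 1 = (r : ℕ) then (T * ψ ((r : ℕ) + 1 - j)) p.2 q.2 else 0)
            = (if (⟨i + 1, hlt⟩ : Fin (n+1)) = r then (T * ψ ((r : ℕ) + 1 - j)) p.2 q.2 else 0) :=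
          fun r => if_congr (by simp [Fin.ext_iff]) rfl rfl
        rw [Finset.sum_congr rfl fun r _ => hrw r, Finset.sum_ite_eq]
        have : (i + 1 : ℕ) + 1 - j = i + 2 - j := by omega
        simp [this]
      · rw [if_neg hin]
        refine Finset.sum_eq_zero fun r _ => ?_
        have : ¬ (i + 1 = (r : ℕ)) := by have := r.isLt; omega
        rw [if_neg this]
    have S3 : (∑ r : Fin (n+1), if (r : ℕ) + 1 = i then (R * ψ ((r : ℕ) + 1 - j)) p.2 q.2 else 0)
        = (if 0 < i then (R * ψ (i - j)) p.2 q.2 else 0) := by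
      by_cases hi0 : 0 < i
      · have hlt : i - 1 < n + 1 := by omega
        rw [if_pos hi0]
        have hrw : ∀ r : Fin (n+1), (if (r : ℕ) + 1 = i then (R * ψ ((r : ℕ) + 1 - j)) p.2 q.2 else 0)
            = (if (⟨i - 1, hlt⟩ : Fin (n+1)) = r then (R * ψ ((r : ℕ) + 1 - j)) p.2 q.2 else 0) :=
          fun r => if_congr (by simp only [Fin.ext_iff]; omega) rfl rfl
        rw [Finset.sum_congr rfl fun r _ => hrw r, Finset.sum_ite_eq]
        have : (i - 1 : ℕ) + 1 - j = i - j := by omega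
        simp [this]
      · rw [if_neg hi0]
        refine Finset.sum_eq_zero fun r _ => ?_
        have : ¬ ((r : ℕ) + 1 = i) := by omega
        rw [if_neg this]
    rw [S1, S2, S3, hM]
    beta_reduce
    -- now case analysis
    by_cases hil : i = n
    · -- last block row
      have hS2 : ¬ (i < n) := by omega
      have hMc : ¬ ((p.1 : ℕ) + 1 = (q.1 : ℕ) ∧ p.2 = q.2) := by
        rintro ⟨h, -⟩; omega
      rw [if_neg hS2, if_neg hMc, if_pos (show (p.1 : ℕ) = n from hil), add_zero]
      have hidx2 : n + 2 - j = (n - j) + 2 := by omega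
      have hidx1 : i + 1 - j = (n - j) + 1 := by omega
      have hmat : A * ψ ((n - j) + 1) + R * ψ (n - j) = -(T * ψ ((n - j) + 2)) := by
        rw [BTAux.psi_rec E hT (n - j), neg_neg, hA]
      by_cases hi0 : 0 < i
      · have hidx3 : i - j = n - j := by omega
        rw [if_pos hi0, hidx1, hidx2, hidx3, ← Matrix.add_apply, hmat]
      · -- i = 0, so n = 0, j = 0
        have hn0 : n = 0 := by omega
        have hj0 : j = 0 := by omega
        rw [if_neg hi0, add_zero, hidx1, hidx2]
        have : R * ψ (n - j) = 0 := by
          rw [hn0, hj0]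
          simp [hψ0]
        rw [← hmat, this, add_zero]
    · -- interior block row
      have hin : i < n := by omega
      have hS2 : i < n := hin
      have hMn : ¬ ((p.1 : ℕ) = n) := by omega
      rw [if_pos hS2]
      by_cases hji : j ≤ i
      · -- recursion kills the row
        have hMc : ¬ ((p.1 : ℕ) + 1 = (q.1 : ℕ) ∧ p.2 = q.2) := by
          rintro ⟨h, -⟩; omega
        rw [if_neg hMc, if_neg hMn]
        have hidx1 : i + 1 - j = (i - j) + 1 := by omega
        have hidx2 : i + 2 - j = (i - j) + 2 := by omega
        have hmat : A * ψ ((i - j) + 1) + T * ψ ((i - j) + 2) + R * ψ (i - j) = 0 := by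
          rw [BTAux.psi_rec E hT (i - j), hA]
          abel
        by_cases hi0 : 0 < i
        · rw [if_pos hi0, hidx1, hidx2, ← Matrix.add_apply, ← Matrix.add_apply, hmat,
            Matrix.zero_apply]
        · have hi00 : i = 0 := by omega
          have hj0 : j = 0 := by omega
          have hR0 : R * ψ (i - j) = 0 := by
            rw [hi00, hj0]
            simp [hψ0]
          rw [hR0, add_zero] at hmat
          rw [if_neg hi0, hidx1, hidx2, add_zero, ← Matrix.add_apply, hmat,
            Matrix.zero_apply]
      · by_cases hj1 : j = i + 1
        · -- superdiagonal : identity block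
          have hidx1 : i + 1 - j = 0 := by omega
          have hidx2 : i + 2 - j = 1 := by omega
          have hMc : ((p.1 : ℕ) + 1 = (q.1 : ℕ)) := by omega
          rw [hidx1, hidx2, hψ0, Matrix.mul_zero, Matrix.zero_apply, zero_add, hψ1]
          have hR3 : (if 0 < i then (R * ψ (i - j)) p.2 q.2 else 0) = 0 := by
            have : i - j = 0 := by omega
            rw [this, hψ0, Matrix.mul_zero]
            simp
          rw [hR3, add_zero]
          by_cases h2 : p.2 = q.2
          · rw [if_pos ⟨hMc, h2⟩, h2, Matrix.one_apply_eq]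
          · rw [if_neg (fun hc => h2 hc.2), if_neg hMn, Matrix.one_apply_ne h2]
        · -- far above the diagonal : everything vanishes
          have hidx1 : i + 1 - j = 0 := by omega
          have hidx2 : i + 2 - j = 0 := by omega
          have hidx3 : i - j = 0 := by omega
          have hMc : ¬ ((p.1 : ℕ) + 1 = (q.1 : ℕ) ∧ p.2 = q.2) := by
            rintro ⟨h, -⟩; omega
          rw [hidx1, hidx2, hidx3, hψ0, Matrix.mul_zero, Matrix.mul_zero, Matrix.mul_zero,
            if_neg hMc, if_neg hMn]
          simp
  -- determinant of S
  have hdetS : S.det = (T⁻¹).det ^ (n+1) := by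
    have h0 : ∀ p q : Fin (n+1) × Fin L, p.1 < q.1 → S p q = 0 := by
      intro p q hpq
      have hlt : (p.1 : ℕ) < (q.1 : ℕ) := hpq
      have hz : (p.1 : ℕ) + 1 - (q.1 : ℕ) = 0 := by omega
      show ψ ((p.1 : ℕ) + 1 - (q.1 : ℕ)) p.2 q.2 = 0
      rw [hz, hψ0, Matrix.zero_apply]
    have hd : ∀ (k : Fin (n+1)) (a b : Fin L), S (k, a) (k, b) = T⁻¹ a b := by
      intro k a b
      show ψ ((k : ℕ) + 1 - (k : ℕ)) a b = _
      have hone : (k : ℕ) + 1 - (k : ℕ) = 1 := by omega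
      rw [hone]
      rfl
    rw [BTAux.det_blockLowerTriangular S (fun _ => T⁻¹) h0 hd, Finset.prod_const,
      Finset.card_univ, Fintype.card_fin]
  -- column rotation permutation
  set e : Equiv.Perm (Fin (n+1) × Fin L) :=
    Equiv.prodCongrLeft (fun _ : Fin L => finRotate (n+1)) with he
  have heapp : ∀ p : Fin (n+1) × Fin L, e p = (p.1 + 1, p.2) := by
    rintro ⟨r, l⟩
    simp [he, finRotate_succ_apply]
  have hval : ∀ r : Fin (n+1), ((r + 1 : Fin (n+1)) : ℕ)
      = if (r : ℕ) = n then 0 else (r : ℕ) + 1 := by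
    intro r
    rw [Fin.val_add_one r]
    by_cases hr : r = Fin.last n
    · rw [if_pos hr, if_pos]
      rw [hr]
      rfl
    · rw [if_neg hr, if_neg]
      intro hc
      exact hr (Fin.ext (by simpa using hc))
  have hdetM2 : (M.submatrix id ⇑e).det = (-(T * ψ (n+2))).det := by
    have h0 : ∀ p q : Fin (n+1) × Fin L, p.1 < q.1 → (M.submatrix id ⇑e) p q = 0 := by
      intro p q hpq
      have hlt : (p.1 : ℕ) < (q.1 : ℕ) := hpq
      have hqn : (q.1 : ℕ) < n + 1 := q.1.isLt
      rw [Matrix.submatrix_apply, id, heapp, hM]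
      beta_reduce
      rw [if_neg ?_, if_neg ?_]
      · omega
      · rintro ⟨hc, -⟩
        rw [hval q.1] at hc
        by_cases hq : (q.1 : ℕ) = n
        · rw [if_pos hq] at hc; omega
        · rw [if_neg hq] at hc; omega
    have hd : ∀ (k : Fin (n+1)) (a b : Fin L), (M.submatrix id ⇑e) (k, a) (k, b)
        = (if (k : ℕ) = n then -(T * ψ (n+2)) else 1) a b := by
      intro k a b
      rw [Matrix.submatrix_apply, id, heapp, hM]
      beta_reduce
      by_cases hk : (k : ℕ) = n
      · have hc1 : ¬ (((k, a).1 : ℕ) + 1 = ((k + 1 : Fin (n+1)) : ℕ) ∧ a = b) := by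
          rintro ⟨hc, -⟩
          rw [hval k, if_pos hk] at hc
          omega
        rw [if_pos hk]
        rw [if_neg hc1, if_pos hk]
        rw [hval k, if_pos hk]
        norm_num
      · have hv : ((k + 1 : Fin (n+1)) : ℕ) = (k : ℕ) + 1 := by rw [hval k, if_neg hk]
        rw [if_neg hk]
        by_cases hab : a = b
        · rw [if_pos ⟨by rw [hv], hab⟩]
          simp [hab, hk, Matrix.one_apply]
        · rw [if_neg (fun hc => hab hc.2), if_neg hk]
          simp [Matrix.one_apply, hab, hk]
    rw [BTAux.det_blockLowerTriangular _ _ h0 hd]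
    rw [Finset.prod_eq_single (Fin.last n) ?_ ?_]
    · rw [if_pos (by rfl : ((Fin.last n : Fin (n+1)) : ℕ) = n)]
    · intro k _ hk
      have hkn : ¬ ((k : ℕ) = n) := fun hc => hk (Fin.ext (by simpa using hc))
      rw [if_neg hkn, Matrix.det_one]
    · intro hc
      exact absurd (Finset.mem_univ _) hc
  have hperm : (M.submatrix id ⇑e).det = ((Equiv.Perm.sign e : ℤ) : ℂ) * M.det :=
    Matrix.det_permute' e M
  have hsign : ((Equiv.Perm.sign e : ℤ) : ℂ) = (-1 : ℂ) ^ (n * L) := by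
    rw [he, Equiv.Perm.sign_prodCongrLeft]
    simp only [sign_finRotate, Finset.prod_const, Finset.card_univ, Fintype.card_fin]
    push_cast
    rw [← pow_mul]
  have hsq : ((-1 : ℂ) ^ (n * L)) * ((-1 : ℂ) ^ (n * L)) = 1 := by
    rw [← pow_add]
    exact Even.neg_one_pow ⟨n * L, rfl⟩
  have hMdet : M.det = (-1 : ℂ) ^ (n * L) * (-(T * ψ (n+2))).det := by
    calc M.det = ((-1 : ℂ) ^ (n * L) * (-1 : ℂ) ^ (n * L)) * M.det := by rw [hsq, one_mul]
    _ = (-1 : ℂ) ^ (n * L) * (((Equiv.Perm.sign e : ℤ) : ℂ) * M.det) := by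
        rw [mul_assoc, hsign]
    _ = (-1 : ℂ) ^ (n * L) * (-(T * ψ (n+2))).det := by rw [← hperm, hdetM2]
  have hdetHS : H.det * S.det = M.det := by rw [← Matrix.det_mul, key]
  have hTdet : T.det ≠ 0 := hT.ne_zero
  have hTinv : (T⁻¹).det = (T.det)⁻¹ := by
    rw [Matrix.det_nonsing_inv, Ring.inverse_eq_inv']
  have h2 : H.det = M.det * T.det ^ (n+1) := by
    have hc : ((T.det)⁻¹) ^ (n+1) * T.det ^ (n+1) = 1 := by
      rw [← mul_pow, inv_mul_cancel₀ hTdet, one_pow]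
    calc H.det = H.det * (((T.det)⁻¹) ^ (n+1) * T.det ^ (n+1)) := by rw [hc, mul_one]
    _ = (H.det * S.det) * T.det ^ (n+1) := by rw [hdetS, hTinv, mul_assoc]
    _ = M.det * T.det ^ (n+1) := by rw [hdetHS]
  show H.det = _
  rw [BTAux.toBlocks₁₁_transfer_pow E hT (n+1), h2, hMdet, Matrix.det_neg, Fintype.card_fin]
  show _ = _ * _ * (T * ψ (n + 1 + 1)).det
  rw [show (n+1) * L = n * L + L by ring, pow_add]
  ring

end
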